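/- For all real numbers a, b with a ≥ b > 0, setting λ := (a−b)/(a+b), the error of Ramanujan's approximation satisfies p(a,b) − p_R(a,b) ≤ (14/11)·(22/7 − π)·(a+b)·λ^10. -/

import Mathlib

open Real

/-- The perimeter of an ellipse with semi-axes `a ≥ b > 0`. -/
noncomputable def ellipsePerimeter (a b : ℝ) : ℝ :=
  4 * ∫ φ in (0:ℝ)..(Real.pi / 2), Real.sqrt (a ^ 2 * Real.sin φ ^ 2 + b ^ 2 * Real.cos φ ^ 2)

/-- Ramanujan's approximation to the perimeter of an ellipse. -/
noncomputable def ramanujanPerimeter (a b : ℝ) : ℝ :=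
  Real.pi * ((a + b) + 3 * (a - b) ^ 2 / (10 * (a + b) + Real.sqrt (a ^ 2 + 14 * a * b + b ^ 2)))

/-- signed binomial coefficients of √(1-x) : √(1-x) = ∑ cc k * x^k -/
noncomputable def cc : ℕ → ℝ
  | 0 => 1
  | k+1 => cc k * (2*k-1)/(2*k+2)

/-- coefficients of the series of Ramanujan's approximation -/
noncomputable def rr : ℕ → ℝ
  | 0 => 1/2
  | m+1 => (-4 * cc (m+1) * (3/4)^(m+1) - rr m)/32

section PartA
open Finset
lemma ringChoose_succ (r : ℝ) (k : ℕ) :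
    Ring.choose r (k+1) = Ring.choose r k * (r - k) / (k+1) := by
  have h := Ring.descPochhammer_eq_factorial_smul_choose r (k+1)
  have h2 := Ring.descPochhammer_eq_factorial_smul_choose r k
  rw [descPochhammer_succ_right, Polynomial.smeval_mul] at h
  have hX : (Polynomial.X - (k : Polynomial ℤ)).smeval r = r - k := by
    simp [Polynomial.smeval_sub, Polynomial.smeval_X, Polynomial.smeval_natCast]
  rw [hX, h2] at h
  have hfac : ((k+1).factorial : ℝ) = (k.factorial : ℝ) * (k+1) := by
    rw [Nat.factorial_succ]; push_cast; ring
  have hk1 : ((k:ℝ)+1) ≠ 0 := by positivity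
  have hkf : ((k.factorial : ℝ)) ≠ 0 := by positivity
  rw [nsmul_eq_mul, nsmul_eq_mul, hfac] at h
  have h3 : (k.factorial : ℝ) * (Ring.choose r k * (r - k)) =
      (k.factorial : ℝ) * (Ring.choose r (k+1) * (k+1)) := by push_cast at h ⊢; ring_nf; ring_nf at h; linarith [h]
  have h4 := mul_left_cancel₀ hkf h3
  field_simp
  linarith [h4]

lemma cc_eq_choose (k : ℕ) : cc k = (-1)^k * Ring.choose ((2:ℝ)⁻¹) k := by
  induction k with
  | zero => simp [cc, Ring.choose_zero_right]
  | succ k ih =>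
    rw [cc, ih, ringChoose_succ]
    field_simp
    ring

lemma cc_conv (k : ℕ) :
    ∑ ij ∈ antidiagonal k, cc ij.1 * cc ij.2
      = if k = 0 then 1 else if k = 1 then -1 else 0 := by
  have h : ∑ ij ∈ antidiagonal k, cc ij.1 * cc ij.2
      = (-1)^k * ∑ ij ∈ antidiagonal k, Ring.choose ((2:ℝ)⁻¹) ij.1 * Ring.choose ((2:ℝ)⁻¹) ij.2 := by
    rw [mul_sum]
    refine Finset.sum_congr rfl fun ij hij => ?_
    rw [Finset.HasAntidiagonal.mem_antidiagonal] at hij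
    rw [cc_eq_choose, cc_eq_choose, ← hij, pow_add]
    ring
  rw [h, ← Ring.add_choose_eq k (Commute.all _ _)]
  have h2 : (2:ℝ)⁻¹ + (2:ℝ)⁻¹ = ((1:ℕ):ℝ) := by norm_num
  rw [h2, Ring.choose_natCast]
  match k with
  | 0 => simp
  | 1 => simp
  | (n+2) => simp [Nat.choose_eq_zero_of_lt]

end PartA

section PartB
open Finset
lemma cc_succ (k : ℕ) : cc (k+1) = cc k * (2*(k:ℝ)-1)/(2*(k:ℝ)+2) := rfl
lemma rr_succ (m : ℕ) : rr (m+1) = (-4 * cc (m+1) * (3/4)^(m+1) - rr m)/32 := rfl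

lemma cc_zero : cc 0 = 1 := rfl
lemma cc_one : cc 1 = -(1/2) := by norm_num [cc]
lemma cc_two : cc 2 = -(1/8) := by norm_num [cc]
lemma cc_three : cc 3 = -(1/16) := by norm_num [cc]
lemma cc_four : cc 4 = -(5/128) := by norm_num [cc]
lemma cc_five : cc 5 = -(7/256) := by norm_num [cc]
lemma cc_six : cc 6 = -(21/1024) := by norm_num [cc]

lemma rr_zero : rr 0 = 1/2 := rfl
lemma rr_one : rr 1 = 1/32 := by norm_num [rr, cc_one]
lemma rr_two : rr 2 = 1/128 := by norm_num [rr, cc_one, cc_two]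
lemma rr_three : rr 3 = 25/8192 := by norm_num [rr, cc_one, cc_two, cc_three]
lemma rr_four : rr 4 = 95/65536 := by norm_num [rr, cc_one, cc_two, cc_three, cc_four]

lemma cc_neg : ∀ k, 1 ≤ k → cc k < 0 := by
  intro k hk
  induction k with
  | zero => omega
  | succ k ih =>
    rcases Nat.eq_or_lt_of_le hk with h | h
    · rw [← h]; norm_num [cc_one]
    · have hk1 : 1 ≤ k := by omega
      have := ih hk1
      rw [cc_succ]
      have h1 : (0:ℝ) < 2*k-1 := by
        have : (1:ℝ) ≤ k := by exact_mod_cast hk1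
        linarith
      have h2 : (0:ℝ) < 2*k+2 := by positivity
      exact div_neg_of_neg_of_pos (mul_neg_of_neg_of_pos this h1) h2

lemma cc_abs_le_one : ∀ k, |cc k| ≤ 1 := by
  intro k
  induction k with
  | zero => simp [cc_zero]
  | succ k ih =>
    rw [cc_succ, abs_div, abs_mul]
    have h2 : |(2*(k:ℝ)+2)| = 2*k+2 := abs_of_pos (by positivity)
    have h1 : |(2*(k:ℝ)-1)| ≤ 2*k+2 := by
      rw [abs_le]
      have := Nat.cast_nonneg (α := ℝ) k
      constructor <;> linarith
    rw [h2, div_le_one (by positivity)]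
    calc |cc k| * |2*(k:ℝ)-1| ≤ 1 * (2*k+2) :=
          mul_le_mul ih h1 (abs_nonneg _) zero_le_one
      _ = 2*k+2 := by ring

lemma rr_bounds : ∀ m, 1 ≤ m → 0 ≤ rr m ∧ rr m ≤ -4 * cc m * (3/4)^m / 16 := by
  intro m hm
  induction m with
  | zero => omega
  | succ m ih =>
    rcases Nat.eq_or_lt_of_le hm with h | h
    · rw [← h]; norm_num [rr_one, cc_one]
    · have hm1 : 1 ≤ m := by omega
      obtain ⟨ih0, ih1⟩ := ih hm1
      have hccm := cc_neg m hm1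
      have hccm1 := cc_neg (m+1) (by omega)
      have hmR : (1:ℝ) ≤ m := by exact_mod_cast hm1
      have hden : (0:ℝ) < 2*m+2 := by positivity
      have hp : (0:ℝ) < (3/4:ℝ)^m := by positivity
      -- u_m ≤ 16 * u_{m+1}
      have hu : -4 * cc m * (3/4)^m ≤ 16 * (-4 * cc (m+1) * (3/4)^(m+1)) := by
        have he : 16 * (-4 * cc (m+1) * (3/4)^(m+1))
            = (-4 * cc m * (3/4)^m) * (12 * ((2*m-1)/(2*m+2))) := by
          rw [cc_succ, pow_succ]; field_simp; ring
        rw [he]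
        have hq : (1:ℝ) ≤ 12 * ((2*m-1)/(2*m+2)) := by
          rw [mul_div_assoc'] at *
          rw [le_div_iff₀ hden]; linarith
        have hbase : (0:ℝ) ≤ -4 * cc m * (3/4)^m := by nlinarith
        nlinarith
      have hle : rr m ≤ -4 * cc (m+1) * (3/4)^(m+1) := by linarith
      constructor
      · rw [rr_succ]; linarith
      · rw [rr_succ]
        have h0 : 0 ≤ -4 * cc (m+1) * (3/4)^(m+1) := by
          have hp1 : (0:ℝ) ≤ (3/4:ℝ)^(m+1) := by positivity
          nlinarith
        linarith

lemma rr_nonneg : ∀ m, 0 ≤ rr m := by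
  intro m
  match m with
  | 0 => norm_num [rr_zero]
  | m+1 => exact (rr_bounds (m+1) (by omega)).1

lemma rr_le_geom : ∀ m, rr m ≤ 4 * (3/4)^m := by
  intro m
  match m with
  | 0 => norm_num [rr_zero]
  | m+1 =>
    have h := (rr_bounds (m+1) (by omega)).2
    have h1 : |cc (m+1)| ≤ 1 := cc_abs_le_one (m+1)
    have h2 : -cc (m+1) ≤ 1 := by cases abs_le.1 h1; linarith
    have hp : (0:ℝ) ≤ (3/4:ℝ)^(m+1) := by positivity
    nlinarith

lemma summable_rr : Summable rr :=
  Summable.of_nonneg_of_le rr_nonneg rr_le_geom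
    ((summable_geometric_of_lt_one (by norm_num) (by norm_num)).mul_left 4)

lemma key_geom : ∀ m, 5 ≤ m → (-cc m) * (3/4)^m ≤ 16 * cc (m+1)^2 := by
  intro m hm
  induction m with
  | zero => omega
  | succ m ih =>
    rcases Nat.eq_or_lt_of_le hm with h | h
    · rw [← h]; norm_num [cc_five, cc_six]
    · have hm5 : 5 ≤ m := by omega
      have IH := ih hm5
      have hccm := cc_neg m (by omega)
      have hccm1 := cc_neg (m+1) (by omega)
      have hmR : (5:ℝ) ≤ m := by exact_mod_cast hm5
      have hden : (0:ℝ) < 2*m+2 := by positivity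
      have hden4 : (0:ℝ) < 2*m+4 := by positivity
      have hstep : (3*(2*(m:ℝ)-1))/(4*(2*(m:ℝ)+2)) ≤ ((2*(m:ℝ)+1)/(2*(m:ℝ)+4))^2 := by
        rw [div_pow, div_le_div_iff₀ (by positivity) (by positivity)]
        nlinarith [hmR]
      have hp : (0:ℝ) < (3/4:ℝ)^m := by positivity
      have lhs_eq : (-cc (m+1)) * (3/4)^(m+1) =
          ((-cc m) * (3/4)^m) * ((3*(2*(m:ℝ)-1))/(4*(2*(m:ℝ)+2))) := by
        rw [cc_succ, pow_succ]; field_simp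
      have rhs_eq : cc (m+1+1)^2 = cc (m+1)^2 * ((2*(m:ℝ)+1)/(2*(m:ℝ)+4))^2 := by
        rw [cc_succ (m+1)]
        push_cast
        field_simp
        ring
      rw [lhs_eq, rhs_eq]
      have hfac_pos : (0:ℝ) ≤ (3*(2*(m:ℝ)-1))/(4*(2*(m:ℝ)+2)) := by
        apply div_nonneg <;> nlinarith
      calc ((-cc m) * (3/4)^m) * ((3*(2*(m:ℝ)-1))/(4*(2*(m:ℝ)+2)))
          ≤ (16 * cc (m+1)^2) * ((3*(2*(m:ℝ)-1))/(4*(2*(m:ℝ)+2))) :=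
            mul_le_mul_of_nonneg_right IH hfac_pos
        _ ≤ (16 * cc (m+1)^2) * ((2*(m:ℝ)+1)/(2*(m:ℝ)+4))^2 :=
            mul_le_mul_of_nonneg_left hstep (by positivity)
        _ = 16 * (cc (m+1)^2 * ((2*(m:ℝ)+1)/(2*(m:ℝ)+4))^2) := by ring

lemma rr_le_2ccsq : ∀ m, 4 ≤ m → rr m ≤ 2 * cc (m+1)^2 := by
  intro m hm
  rcases Nat.eq_or_lt_of_le hm with h | h
  · rw [← h]; norm_num [rr_four, cc_five]
  · have hm5 : 5 ≤ m := by omega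
    obtain ⟨m', rfl⟩ : ∃ m', m = m' + 1 := ⟨m - 1, by omega⟩
    have h0 : 0 ≤ rr m' := rr_nonneg m'
    have h2 := key_geom (m'+1) hm5
    rw [rr_succ]
    linarith

end PartB

section PartC
open Finset
variable {𝕜 : Type*} [RCLike 𝕜]

lemma summable_norm_cc_pow (w : 𝕜) (h : ‖w‖ < 1) :
    Summable (fun k => ‖(cc k : 𝕜) * w^k‖) := by
  apply Summable.of_nonneg_of_le (fun k => norm_nonneg _) (fun k => ?_)
    (summable_geometric_of_lt_one (norm_nonneg w) h)
  rw [norm_mul, norm_pow]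
  calc ‖((cc k : ℝ) : 𝕜)‖ * ‖w‖^k ≤ 1 * ‖w‖^k := by
        apply mul_le_mul_of_nonneg_right _ (by positivity)
        rw [RCLike.norm_ofReal]
        exact cc_abs_le_one k
    _ = ‖w‖^k := one_mul _

lemma summable_cc_pow (w : 𝕜) (h : ‖w‖ < 1) :
    Summable (fun k => (cc k : 𝕜) * w^k) :=
  (summable_norm_cc_pow w h).of_norm

lemma S_sq (w : 𝕜) (h : ‖w‖ < 1) :
    (∑' k, (cc k : 𝕜) * w^k) * (∑' k, (cc k : 𝕜) * w^k) = 1 - w := by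
  rw [tsum_mul_tsum_eq_tsum_sum_antidiagonal_of_summable_norm
    (summable_norm_cc_pow w h) (summable_norm_cc_pow w h)]
  have hterm : ∀ k : ℕ, (∑ ij ∈ antidiagonal k, ((cc ij.1 : 𝕜) * w^ij.1) * ((cc ij.2 : 𝕜) * w^ij.2))
      = (if k = 0 then 1 else if k = 1 then -1 else 0 : ℝ) * w^k := by
    intro k
    rw [← cc_conv k, RCLike.ofReal_sum, Finset.sum_mul]
    refine Finset.sum_congr rfl fun ij hij => ?_
    rw [Finset.HasAntidiagonal.mem_antidiagonal] at hij
    rw [← hij, pow_add, RCLike.ofReal_mul]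
    ring
  rw [tsum_congr hterm]
  rw [tsum_eq_sum (s := {0, 1}) (by
    intro k hk
    simp only [Finset.mem_insert, Finset.mem_singleton] at hk
    push_cast
    rw [if_neg (by omega), if_neg (by omega)]
    simp)]
  norm_num
  ring

end PartC

section PartD
open Finset
noncomputable def clamp (y : ℝ) : ℝ := max 0 (min y (3/4))

lemma clamp_mem (y : ℝ) : 0 ≤ clamp y ∧ clamp y ≤ 3/4 := by
  constructor
  · exact le_max_left _ _
  · rw [clamp, max_le_iff]
    exact ⟨by norm_num, min_le_right _ _⟩

lemma clamp_of_mem {y : ℝ} (h0 : 0 ≤ y) (h1 : y ≤ 3/4) : clamp y = y := by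
  rw [clamp, min_eq_left h1, max_eq_right h0]

noncomputable def G (y : ℝ) : ℝ := ∑' k, cc k * (clamp y)^k

lemma G_continuous : Continuous G := by
  apply continuous_tsum (u := fun k => (3/4:ℝ)^k)
  · intro k
    exact continuous_const.mul ((continuous_const.max ((continuous_id.min continuous_const))).pow k)
  · exact summable_geometric_of_lt_one (by norm_num) (by norm_num)
  · intro k y
    rw [Real.norm_eq_abs, abs_mul, abs_pow]
    obtain ⟨h0, h1⟩ := clamp_mem y
    rw [abs_of_nonneg h0]
    calc |cc k| * clamp y ^ k ≤ 1 * (3/4)^k := by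
          apply mul_le_mul (cc_abs_le_one k) (pow_le_pow_left₀ h0 h1 k) (by positivity) zero_le_one
      _ = (3/4)^k := one_mul _

lemma clamp_norm_lt (y : ℝ) : ‖clamp y‖ < 1 := by
  obtain ⟨h0, h1⟩ := clamp_mem y
  rw [Real.norm_eq_abs, abs_of_nonneg h0]; linarith

lemma G_sq (y : ℝ) : G y * G y = 1 - clamp y := S_sq (clamp y) (clamp_norm_lt y)

lemma G_zero : G 0 = 1 := by
  rw [G, clamp_of_mem le_rfl (by norm_num)]
  rw [tsum_eq_sum (s := {0}) (by
    intro k hk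
    simp only [Finset.mem_singleton] at hk
    rw [zero_pow hk, mul_zero])]
  simp [cc]

lemma G_nonneg (y : ℝ) : 0 ≤ G y := by
  by_contra hneg
  push_neg at hneg
  rcases le_or_gt 0 y with hy | hy
  · have h01 : (0:ℝ) ≤ y := hy
    have := intermediate_value_Icc' h01 G_continuous.continuousOn
    have h0mem : (0:ℝ) ∈ Set.Icc (G y) (G 0) := by
      rw [G_zero]; exact ⟨le_of_lt hneg, zero_le_one⟩
    obtain ⟨z, _, hz⟩ := this h0mem
    have := G_sq z
    rw [hz] at this
    obtain ⟨_, hcz⟩ := clamp_mem z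
    nlinarith
  · have : clamp y = 0 := by
      rw [clamp, max_eq_left]
      exact le_trans (min_le_left _ _) (le_of_lt hy)
    have hGy : G y = G 0 := by
      rw [G, G, this, clamp_of_mem le_rfl (by norm_num)]
    rw [hGy, G_zero] at hneg
    linarith

lemma tsum_cc_eq_sqrt {x : ℝ} (h0 : 0 ≤ x) (h1 : x ≤ 3/4) :
    ∑' k, cc k * x^k = Real.sqrt (1-x) := by
  have hc : clamp x = x := clamp_of_mem h0 h1
  have hG : G x * G x = 1 - x := by rw [G_sq, hc]
  have hGx : G x = ∑' k, cc k * x^k := by rw [G, hc]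
  rw [← hGx]
  rw [show (1:ℝ) - x = G x * G x from hG.symm, ← sq]
  rw [Real.sqrt_sq (G_nonneg x)]

end PartD

section PartE1
open Finset Complex
section Elip
variable {l : ℝ} (hl0 : 0 ≤ l) (hl1 : l < 1)

/-- the complex point on the circle -/
noncomputable def wpt (l φ : ℝ) : ℂ := (l : ℂ) * Complex.exp ((2*φ : ℝ) * Complex.I)

lemma wpt_norm (φ : ℝ) : ‖wpt l φ‖ = |l| := by
  rw [wpt, norm_mul, Complex.norm_exp_ofReal_mul_I,
    Complex.norm_real, Real.norm_eq_abs, mul_one]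

include hl0 hl1 in
lemma wpt_norm_lt (φ : ℝ) : ‖wpt l φ‖ < 1 := by
  rw [wpt_norm, _root_.abs_of_nonneg hl0]; exact hl1

lemma integrand_eq_abs (φ : ℝ) :
    Real.sqrt ((1+l)^2 * Real.sin φ^2 + (1-l)^2 * Real.cos φ^2)
      = ‖1 - wpt l φ‖ := by
  have h1 : (1 : ℂ) - wpt l φ =
      Complex.ofReal (1 - l * Real.cos (2*φ)) + Complex.ofReal (-(l * Real.sin (2*φ))) * Complex.I := by
    rw [wpt, Complex.exp_mul_I]
    simp only [← Complex.ofReal_cos, ← Complex.ofReal_sin]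
    push_cast
    ring
  rw [h1, Complex.norm_def, Complex.normSq_add_mul_I]
  congr 1
  have hc2 : Real.cos (2*φ) = Real.cos φ^2 - Real.sin φ^2 := by
    rw [Real.cos_two_mul']
  have hs2 : Real.sin (2*φ) = 2 * Real.sin φ * Real.cos φ := Real.sin_two_mul φ
  have hpy : Real.sin φ^2 + Real.cos φ^2 = 1 := Real.sin_sq_add_cos_sq φ
  rw [hc2, hs2]
  linear_combination (1 - l^2*(Real.sin φ^2 + Real.cos φ^2)) * hpy

/-- terms of the double series -/
noncomputable def FF (l : ℝ) (kj : ℕ × ℕ) (φ : ℝ) : ℂ :=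
  ((cc kj.1 * cc kj.2 * l^(kj.1+kj.2) : ℝ) : ℂ)
    * Complex.exp ((2*((kj.1:ℝ)-(kj.2:ℝ))*φ : ℝ) * Complex.I)

lemma FF_norm (kj : ℕ × ℕ) (φ : ℝ) :
    ‖FF l kj φ‖ = |cc kj.1| * |cc kj.2| * |l|^(kj.1+kj.2) := by
  rw [FF, norm_mul, Complex.norm_exp_ofReal_mul_I,
    mul_one, Complex.norm_real, Real.norm_eq_abs, abs_mul, abs_mul, _root_.abs_pow]

include hl0 hl1 in
lemma abs_eq_tsum (φ : ℝ) :
    ((‖1 - wpt l φ‖ : ℝ) : ℂ) = ∑' kj : ℕ × ℕ, FF l kj φ := by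
  set w := wpt l φ with hw
  have hnw : ‖w‖ < 1 := wpt_norm_lt hl0 hl1 φ
  have hnwc : ‖(starRingEnd ℂ) w‖ < 1 := by rwa [RCLike.norm_conj]
  set S := ∑' k, (cc k : ℂ) * w^k with hS
  have hconj : (starRingEnd ℂ) S = ∑' k, (cc k : ℂ) * ((starRingEnd ℂ) w)^k := by
    have hsum := (summable_cc_pow (𝕜 := ℂ) w hnw).hasSum
    have h2 := hsum.mapL Complex.conjCLE.toContinuousLinearMap
    have h2' : HasSum (fun k => (cc k : ℂ) * ((starRingEnd ℂ) w)^k) ((starRingEnd ℂ) S) := by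
      simpa [Complex.conjCLE_apply, map_mul, map_pow, Complex.conj_ofReal] using h2
    exact h2'.tsum_eq.symm
  -- S * conj S = normSq S  (real and nonneg)
  have hsq : (S * (starRingEnd ℂ) S) = (Complex.normSq S : ℂ) := (Complex.mul_conj S)
  -- and its square is normSq (1-w)
  have hprod : (S * (starRingEnd ℂ) S) * (S * (starRingEnd ℂ) S) = (Complex.normSq (1-w) : ℂ) := by
    have h1 : S * S = 1 - w := S_sq w hnw
    have h2 : ((starRingEnd ℂ) S) * ((starRingEnd ℂ) S) = 1 - (starRingEnd ℂ) w := by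
      rw [hconj]; exact S_sq _ hnwc
    calc (S * (starRingEnd ℂ) S) * (S * (starRingEnd ℂ) S)
        = (S*S) * (((starRingEnd ℂ) S) * ((starRingEnd ℂ) S)) := by ring
      _ = (1-w) * (1 - (starRingEnd ℂ) w) := by rw [h1, h2]
      _ = (1-w) * (starRingEnd ℂ) (1-w) := by rw [map_sub, map_one]
      _ = (Complex.normSq (1-w) : ℂ) := Complex.mul_conj _
  have hreal : Complex.normSq S * Complex.normSq S = Complex.normSq (1-w) := by
    have := hprod
    rw [hsq] at this
    exact_mod_cast this
  have habs : (‖1-w‖ : ℝ) = Complex.normSq S := by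
    rw [Complex.norm_def]
    rw [show Complex.normSq (1-w) = Complex.normSq S * Complex.normSq S from hreal.symm]
    rw [← sq, Real.sqrt_sq (Complex.normSq_nonneg S)]
  rw [habs, ← hsq]
  -- now expand S * conj S as double tsum
  have hmul : (∑' k, (cc k : ℂ) * w^k) * (∑' k, (cc k : ℂ) * ((starRingEnd ℂ) w)^k)
      = ∑' z : ℕ×ℕ, ((cc z.1 : ℂ) * w^z.1) * ((cc z.2 : ℂ) * ((starRingEnd ℂ) w)^z.2) :=
    tsum_mul_tsum_of_summable_norm (summable_norm_cc_pow w hnw) (summable_norm_cc_pow _ hnwc)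
  rw [hconj, hS, hmul]
  congr 1
  funext kj
  obtain ⟨k, j⟩ := kj
  show ((cc k : ℂ) * w^k) * ((cc j : ℂ) * ((starRingEnd ℂ) w)^j) = FF l (k,j) φ
  have hwk : w^k = (l:ℂ)^k * Complex.exp ((2*(k:ℝ)*φ : ℝ) * Complex.I) := by
    rw [hw, wpt, mul_pow, ← Complex.exp_nat_mul]
    congr 2
    push_cast
    ring
  have hwjc : ((starRingEnd ℂ) w)^j = (l:ℂ)^j * Complex.exp ((-(2*(j:ℝ)*φ) : ℝ) * Complex.I) := by
    rw [hw, wpt, map_mul, mul_pow, Complex.conj_ofReal]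
    congr 1
    rw [← Complex.exp_conj, ← Complex.exp_nat_mul]
    congr 1
    simp only [map_mul, Complex.conj_ofReal, Complex.conj_I]
    push_cast
    ring
  have hexp : Complex.exp ((2*(k:ℝ)*φ : ℝ) * Complex.I) * Complex.exp ((-(2*(j:ℝ)*φ) : ℝ) * Complex.I)
      = Complex.exp ((2*((k:ℝ)-(j:ℝ))*φ : ℝ) * Complex.I) := by
    rw [← Complex.exp_add]
    congr 1
    push_cast
    ring
  rw [hwk, hwjc, FF, ← hexp]
  push_cast
  ring

end Elip

end PartE1

section PartE2
open Finset Complex MeasureTheory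
section Swap
variable {l : ℝ} (hl0 : 0 ≤ l) (hl1 : l < 1)

lemma FF_continuous (kj : ℕ × ℕ) : Continuous (FF l kj) := by
  apply Continuous.mul continuous_const
  apply Complex.continuous_exp.comp
  apply Continuous.mul _ continuous_const
  exact Complex.continuous_ofReal.comp (continuous_const.mul continuous_id)

lemma FF_integrable (kj : ℕ × ℕ) :
    Integrable (FF l kj) (volume.restrict (Set.Ioc 0 (π/2))) :=
  (FF_continuous kj).integrableOn_Ioc

include hl0 in
lemma FF_norm_integral (kj : ℕ × ℕ) :
    ∫ φ, ‖FF l kj φ‖ ∂(volume.restrict (Set.Ioc 0 (π/2)))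
      = (π/2) * ((|cc kj.1| * l^kj.1) * (|cc kj.2| * l^kj.2)) := by
  simp only [FF_norm]
  rw [integral_const]
  rw [Measure.real, Measure.restrict_apply_univ, Real.volume_Ioc]
  rw [ENNReal.toReal_ofReal (by linarith [Real.pi_pos])]
  rw [_root_.abs_of_nonneg hl0, smul_eq_mul, pow_add]
  ring

set_option maxHeartbeats 1000000 in
include hl0 hl1 in
lemma FF_summable_norm_integral :
    Summable (fun kj : ℕ × ℕ =>
      ∫ φ, ‖FF l kj φ‖ ∂(volume.restrict (Set.Ioc 0 (π/2)))) := by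
  have hgeo : Summable (fun k => |cc k| * l^k) := by
    apply Summable.of_nonneg_of_le (fun k => by positivity) (fun k => ?_)
      (summable_geometric_of_lt_one hl0 hl1)
    calc |cc k| * l^k ≤ 1 * l^k := by
          apply mul_le_mul_of_nonneg_right (cc_abs_le_one k) (by positivity)
      _ = l^k := one_mul _
  have hgeon : Summable (fun k => ‖|cc k| * l^k‖) := by
    apply hgeo.congr
    intro k
    symm
    exact Real.norm_of_nonneg (by positivity)
  have hprod : Summable (fun z : ℕ × ℕ => (|cc z.1| * l^z.1) * (|cc z.2| * l^z.2)) :=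
    summable_mul_of_summable_norm hgeon hgeon
  apply (hprod.mul_left (π/2)).congr
  intro kj
  rw [FF_norm_integral hl0]

include hl0 hl1 in
lemma hasSum_FF_integral :
    HasSum (fun kj : ℕ × ℕ => ∫ φ, FF l kj φ ∂(volume.restrict (Set.Ioc 0 (π/2))))
      (((∫ φ in Set.Ioc (0:ℝ) (π/2),
        Real.sqrt ((1+l)^2 * Real.sin φ^2 + (1-l)^2 * Real.cos φ^2)) : ℝ) : ℂ) := by
  have h := MeasureTheory.hasSum_integral_of_summable_integral_norm
    (fun kj => FF_integrable (l := l) kj) (FF_summable_norm_integral hl0 hl1)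
  convert h using 2
  · rfl
  have hcast : ∫ φ, ((Real.sqrt ((1+l)^2 * Real.sin φ^2 + (1-l)^2 * Real.cos φ^2) : ℝ) : ℂ)
        ∂(volume.restrict (Set.Ioc 0 (π/2)))
      = (((∫ φ, Real.sqrt ((1+l)^2 * Real.sin φ^2 + (1-l)^2 * Real.cos φ^2)
        ∂(volume.restrict (Set.Ioc 0 (π/2)))) : ℝ) : ℂ) := integral_ofReal
  rw [← hcast]
  apply integral_congr_ae
  filter_upwards with φ
  rw [integrand_eq_abs (l := l) φ, abs_eq_tsum hl0 hl1 φ]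

-- now compute the individual integrals
lemma re_mul_div_I (x y t : ℝ) : (((x:ℂ)) * ((y:ℂ)/((t:ℂ)*Complex.I))).re = 0 := by
  rcases eq_or_ne t 0 with h | h
  · simp [h]
  · have : ((x:ℂ)) * ((y:ℂ)/((t:ℂ)*Complex.I)) = ((x*y/t : ℝ) : ℂ) * (-Complex.I) := by
      field_simp
      ring_nf
      simp [Complex.I_sq]
    rw [this]
    simp

lemma FF_integral_diag (k : ℕ) :
    ∫ φ, FF l (k,k) φ ∂(volume.restrict (Set.Ioc 0 (π/2)))
      = ((π/2) * (cc k^2 * l^(2*k)) : ℝ) := by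
  have hFF : ∀ φ : ℝ, FF l (k,k) φ = ((cc k^2 * l^(2*k) : ℝ) : ℂ) := by
    intro φ
    rw [FF]
    simp only
    rw [show (2*((k:ℝ)-(k:ℝ))*φ : ℝ) = 0 by ring, Complex.ofReal_zero, zero_mul,
      Complex.exp_zero, mul_one]
    congr 1
    rw [sq, two_mul]
  rw [integral_congr_ae (Filter.Eventually.of_forall hFF), integral_const]
  rw [Measure.real, Measure.restrict_apply_univ, Real.volume_Ioc]
  rw [ENNReal.toReal_ofReal (by linarith [Real.pi_pos]), sub_zero, Complex.real_smul]
  push_cast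
  ring

lemma FF_integral_offdiag_re {k j : ℕ} (hkj : k ≠ j) :
    (∫ φ, FF l (k,j) φ ∂(volume.restrict (Set.Ioc 0 (π/2)))).re = 0 := by
  have hint : ∫ φ, FF l (k,j) φ ∂(volume.restrict (Set.Ioc 0 (π/2)))
      = ∫ φ in (0:ℝ)..(π/2), FF l (k,j) φ := by
    rw [intervalIntegral.integral_of_le (by positivity)]
  have ha0 : (k:ℝ) - (j:ℝ) ≠ 0 := by
    intro h
    apply hkj
    have : (k:ℝ) = j := by linarith [sub_eq_zero.mp h]
    exact_mod_cast this
  have hc0 : ((2*((k:ℝ) - (j:ℝ)) : ℝ) : ℂ) * Complex.I ≠ 0 := by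
    simp [Complex.ext_iff]
    intro h; exact absurd h ha0
  have hFF : ∀ φ : ℝ, FF l (k,j) φ
      = ((cc k * cc j * l^(k+j) : ℝ) : ℂ)
        * Complex.exp ((((2*((k:ℝ) - (j:ℝ)) : ℝ) : ℂ) * Complex.I) * (φ:ℂ)) := by
    intro φ
    rw [FF]
    congr 1
    congr 1
    push_cast
    ring
  rw [hint, intervalIntegral.integral_congr (fun φ _ => hFF φ)]
  rw [intervalIntegral.integral_const_mul]
  rw [integral_exp_mul_complex hc0]
  have hval : Complex.exp ((((2*((k:ℝ) - (j:ℝ)) : ℝ) : ℂ) * Complex.I) * ((π/2 : ℝ):ℂ))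
      = ((Real.cos (((k:ℝ) - (j:ℝ))*π) : ℝ) : ℂ) := by
    have harg : (((2*((k:ℝ) - (j:ℝ)) : ℝ) : ℂ) * Complex.I) * ((π/2 : ℝ):ℂ)
        = ((((k:ℝ) - (j:ℝ))*π : ℝ) : ℂ) * Complex.I := by
      push_cast; ring
    rw [harg, Complex.exp_mul_I]
    have hsin : Real.sin (((k:ℝ) - (j:ℝ))*π) = 0 := by
      have h2 : ((k:ℝ) - (j:ℝ)) * π = ((k:ℤ) - (j:ℤ) : ℤ) * π := by push_cast; ring
      rw [h2]
      exact Real.sin_int_mul_pi _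
    rw [← Complex.ofReal_cos, ← Complex.ofReal_sin, hsin]
    simp
  rw [show (((2*((k:ℝ) - (j:ℝ)) : ℝ) : ℂ) * Complex.I) * ((0 : ℝ):ℂ) = 0 by push_cast; ring]
  rw [hval, Complex.exp_zero]
  rw [show ((Real.cos (((k:ℝ) - (j:ℝ))*π) : ℝ) : ℂ) - 1
      = ((Real.cos (((k:ℝ) - (j:ℝ))*π) - 1 : ℝ) : ℂ) by push_cast; ring]
  exact re_mul_div_I _ _ _

include hl0 hl1 in
lemma integral_sqrt_eq_series :
    ∫ φ in (0:ℝ)..(π/2), Real.sqrt ((1+l)^2 * Real.sin φ^2 + (1-l)^2 * Real.cos φ^2)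
      = ∑' k, (π/2) * (cc k^2 * l^(2*k)) := by
  have h := (hasSum_FF_integral hl0 hl1).mapL Complex.reCLM
  have hre : ∀ kj : ℕ × ℕ,
      Complex.reCLM (∫ φ, FF l kj φ ∂(volume.restrict (Set.Ioc 0 (π/2))))
        = if kj.1 = kj.2 then (π/2) * (cc kj.1^2 * l^(2*kj.1)) else 0 := by
    intro ⟨k, j⟩
    rcases eq_or_ne k j with h' | h'
    · subst h'
      simp only [if_pos rfl]
      rw [Complex.reCLM_apply, FF_integral_diag (l := l) k]
      exact Complex.ofReal_re _
    · simp only [if_neg h']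
      rw [Complex.reCLM_apply]
      exact FF_integral_offdiag_re h'
  rw [show (fun kj : ℕ × ℕ =>
      Complex.reCLM (∫ φ, FF l kj φ ∂(volume.restrict (Set.Ioc 0 (π/2)))))
    = (fun kj : ℕ × ℕ => if kj.1 = kj.2 then (π/2) * (cc kj.1^2 * l^(2*kj.1)) else 0)
    from funext hre] at h
  rw [Complex.reCLM_apply, Complex.ofReal_re] at h
  have hinj : Function.Injective (fun k : ℕ => ((k, k) : ℕ × ℕ)) := by
    intro x y hxy
    exact (Prod.mk.injEq _ _ _ _).mp hxy |>.1
  have hvan : ∀ kj : ℕ × ℕ, kj ∉ Set.range (fun k : ℕ => ((k, k) : ℕ × ℕ)) →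
      (if kj.1 = kj.2 then (π/2) * (cc kj.1^2 * l^(2*kj.1)) else 0) = 0 := by
    intro kj hkj
    rw [if_neg]
    intro hd
    apply hkj
    exact ⟨kj.1, by rw [Prod.ext_iff]; exact ⟨rfl, hd⟩⟩
  have h2 := (hinj.hasSum_iff hvan).mpr h
  rw [show ((fun kj : ℕ × ℕ => if kj.1 = kj.2 then (π/2) * (cc kj.1^2 * l^(2*kj.1)) else 0)
      ∘ (fun k : ℕ => ((k, k) : ℕ × ℕ)))
    = (fun k : ℕ => (π/2) * (cc k^2 * l^(2*k))) from funext fun k => by simp] at h2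
  rw [intervalIntegral.integral_of_le (by linarith [Real.pi_pos])]
  exact h2.tsum_eq.symm

end Swap

end PartE2

section PartE3
open Finset MeasureTheory intervalIntegral
section Bound
variable {l : ℝ} (hl0 : 0 ≤ l) (hl1 : l < 1)

lemma summable_ccsq_pow (hl0 : 0 ≤ l) (hl1 : l < 1) :
    Summable (fun k => cc k^2 * l^(2*k)) := by
  apply Summable.of_nonneg_of_le (fun k => by positivity) (fun k => ?_)
    (summable_geometric_of_lt_one (by positivity) (by nlinarith : l^2 < 1))
  calc cc k^2 * l^(2*k) ≤ 1 * l^(2*k) := by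
        apply mul_le_mul_of_nonneg_right _ (by positivity)
        have := cc_abs_le_one k
        nlinarith [abs_nonneg (cc k), sq_abs (cc k)]
    _ = (l^2)^k := by rw [one_mul, pow_mul]

include hl0 hl1 in
lemma integrand_le (φ : ℝ) (hφ : φ ∈ Set.Icc (0:ℝ) (π/2)) :
    Real.sqrt ((1+l)^2 * Real.sin φ^2 + (1-l)^2 * Real.cos φ^2)
      ≤ 2 * Real.sin φ + (1-l) := by
  have hs : 0 ≤ Real.sin φ := by
    apply Real.sin_nonneg_of_nonneg_of_le_pi hφ.1
    calc φ ≤ π/2 := hφ.2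
      _ ≤ π := by linarith [Real.pi_pos]
  have hrhs : 0 ≤ 2 * Real.sin φ + (1-l) := by linarith
  rw [show (2 * Real.sin φ + (1-l)) = Real.sqrt ((2 * Real.sin φ + (1-l))^2) from
    (Real.sqrt_sq hrhs).symm]
  apply Real.sqrt_le_sqrt
  have hpy := Real.sin_sq_add_cos_sq φ
  nlinarith [hs, sq_nonneg (Real.cos φ)]

include hl0 hl1 in
lemma integral_sqrt_le :
    ∫ φ in (0:ℝ)..(π/2), Real.sqrt ((1+l)^2 * Real.sin φ^2 + (1-l)^2 * Real.cos φ^2)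
      ≤ 2 + (π/2) * (1-l) := by
  have hle : (0:ℝ) ≤ π/2 := by linarith [Real.pi_pos]
  have h1 : ∫ φ in (0:ℝ)..(π/2), Real.sqrt ((1+l)^2 * Real.sin φ^2 + (1-l)^2 * Real.cos φ^2)
      ≤ ∫ φ in (0:ℝ)..(π/2), (2 * Real.sin φ + (1-l)) := by
    apply intervalIntegral.integral_mono_on hle
    · apply Continuous.intervalIntegrable
      continuity
    · apply Continuous.intervalIntegrable
      continuity
    · exact fun φ hφ => integrand_le hl0 hl1 φ hφ
  have h2 : ∫ φ in (0:ℝ)..(π/2), (2 * Real.sin φ + (1-l))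
      = 2 + (π/2) * (1-l) := by
    rw [intervalIntegral.integral_add ((by continuity : Continuous fun φ : ℝ => 2 * Real.sin φ).intervalIntegrable _ _)
      (intervalIntegrable_const)]
    rw [intervalIntegral.integral_const_mul, integral_sin, intervalIntegral.integral_const]
    rw [Real.cos_zero, Real.cos_pi_div_two, sub_zero, smul_eq_mul]
    ring
  linarith

include hl0 hl1 in
lemma sum_range_ccsq_pow_le (N : ℕ) :
    ∑ k ∈ range N, cc k^2 * l^(2*k) ≤ 4/π + (1-l) := by
  have hpi := Real.pi_pos
  have hsum := summable_ccsq_pow hl0 hl1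
  have hsum2 : Summable (fun k => (π/2) * (cc k^2 * l^(2*k))) := hsum.mul_left _
  have h1 : ∑ k ∈ range N, (π/2) * (cc k^2 * l^(2*k)) ≤ ∑' k, (π/2) * (cc k^2 * l^(2*k)) := by
    apply Summable.sum_le_tsum _ (fun k _ => by positivity) hsum2
  rw [← integral_sqrt_eq_series hl0 hl1] at h1
  have h2 := integral_sqrt_le hl0 hl1
  have h3 : ∑ k ∈ range N, (π/2) * (cc k^2 * l^(2*k)) = (π/2) * ∑ k ∈ range N, cc k^2 * l^(2*k) := by
    rw [Finset.mul_sum]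
  rw [h3] at h1
  have h4 : (π/2) * ∑ k ∈ range N, cc k^2 * l^(2*k) ≤ 2 + (π/2)*(1-l) := by linarith
  have h5 : (π/2) * (4/π + (1-l)) = 2 + (π/2)*(1-l) := by field_simp; ring
  rw [← h5] at h4
  exact le_of_mul_le_mul_left h4 (by linarith)

end Bound

lemma sum_range_ccsq_le (N : ℕ) : ∑ k ∈ range N, cc k^2 ≤ 4/π := by
  have hev : ∀ᶠ l in nhdsWithin (1:ℝ) (Set.Iio 1),
      ∑ k ∈ range N, cc k^2 * l^(2*k) ≤ 4/π + (1-l) := by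
    filter_upwards [Ioo_mem_nhdsLT_of_mem (show (1:ℝ) ∈ Set.Ioc (0:ℝ) 1 by norm_num)] with l hl
    exact sum_range_ccsq_pow_le (le_of_lt hl.1) hl.2 N
  have ht1 : Filter.Tendsto (fun l : ℝ => ∑ k ∈ range N, cc k^2 * l^(2*k))
      (nhdsWithin (1:ℝ) (Set.Iio 1)) (nhds (∑ k ∈ range N, cc k^2)) := by
    have hc : Continuous (fun l : ℝ => ∑ k ∈ range N, cc k^2 * l^(2*k)) := by
      continuity
    have := hc.tendsto 1
    simp only [one_pow, mul_one] at this
    exact this.mono_left nhdsWithin_le_nhds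
  have ht2 : Filter.Tendsto (fun l : ℝ => 4/π + (1-l))
      (nhdsWithin (1:ℝ) (Set.Iio 1)) (nhds (4/π)) := by
    have hc : Continuous (fun l : ℝ => 4/π + (1-l)) := by continuity
    have := hc.tendsto 1
    simp only [sub_self, add_zero] at this
    exact this.mono_left nhdsWithin_le_nhds
  exact le_of_tendsto_of_tendsto ht1 ht2 hev

lemma summable_ccsq : Summable (fun k => cc k^2) :=
  summable_of_sum_range_le (fun k => by positivity) sum_range_ccsq_le

lemma tsum_ccsq_le : ∑' k, cc k^2 ≤ 4/π :=
  Real.tsum_le_of_sum_range_le (fun k => by positivity) sum_range_ccsq_le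

end PartE3

section PartF
open Finset
lemma rr_succ' (m : ℕ) : rr (m+1) = (-4 * cc (m+1) * (3/4)^(m+1) - rr m)/32 := rfl

section Ram
variable {l : ℝ} (hl0 : 0 ≤ l) (hl1 : l < 1)

include hl0 hl1 in
lemma x0_mem : 0 ≤ 3*l^2/4 ∧ 3*l^2/4 ≤ 3/4 := by
  constructor
  · positivity
  · nlinarith

include hl0 hl1 in
lemma summable_V : Summable (fun m => rr m * l^(2*m)) := by
  apply Summable.of_nonneg_of_le
    (fun m => mul_nonneg (rr_nonneg m) (by positivity)) (fun m => ?_)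
    ((summable_geometric_of_lt_one (by norm_num) (by norm_num : (3:ℝ)/4 < 1)).mul_left 4)
  calc rr m * l^(2*m) ≤ rr m * 1 := by
        apply mul_le_mul_of_nonneg_left _ (rr_nonneg m)
        exact pow_le_one₀ hl0 (le_of_lt hl1)
    _ = rr m := mul_one _
    _ ≤ 4 * (3/4)^m := rr_le_geom m

include hl0 hl1 in
lemma summable_ccx0 : Summable (fun k => cc k * (3*l^2/4)^k) := by
  obtain ⟨h0, h1⟩ := x0_mem hl0 hl1
  apply Summable.of_norm
  apply Summable.of_nonneg_of_le (fun k => norm_nonneg _) (fun k => ?_)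
    (summable_geometric_of_lt_one (by norm_num) (by norm_num : (3:ℝ)/4 < 1))
  rw [Real.norm_eq_abs, abs_mul, _root_.abs_pow, _root_.abs_of_nonneg h0]
  calc |cc k| * (3*l^2/4)^k ≤ 1 * (3/4)^k := by
        apply mul_le_mul (cc_abs_le_one k) (pow_le_pow_left₀ h0 h1 k) (by positivity) zero_le_one
    _ = (3/4)^k := one_mul _

include hl0 hl1 in
lemma ram_key :
    (24 + 3*l^2/4) * (∑' m, rr m * l^(2*m)) = 15 - 3 * Real.sqrt (1 - 3*l^2/4) := by
  set x0 := 3*l^2/4 with hx0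
  obtain ⟨hx00, hx01⟩ := x0_mem hl0 hl1
  have hV := summable_V hl0 hl1
  have hT := summable_ccx0 hl0 hl1
  -- LHS
  have hL1 : (24 + x0) * (∑' m, rr m * l^(2*m)) = ∑' m, (24 + x0) * (rr m * l^(2*m)) :=
    (tsum_mul_left).symm
  have hsum2 : Summable (fun m => (24 + x0) * (rr m * l^(2*m))) := hV.mul_left _
  have hL2 : ∑' m, (24 + x0) * (rr m * l^(2*m))
      = (24 + x0) * (rr 0 * l^(2*0)) + ∑' m, (24 + x0) * (rr (m+1) * l^(2*(m+1))) :=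
    Summable.tsum_eq_zero_add hsum2
  -- split the tail : (24+x0) * V(m+1) = 24*V(m+1) + x0*V(m+1)
  -- we want to regroup as (24*V(m+1) + x0*V m) ; do it via two series
  -- LHS tail sum: A := ∑' 24*V(m+1), B := ∑' x0*V m ; note ∑' x0 V m = x0*(V0) + ∑' x0 V (m+1)
  -- Instead prove: ∑' (24+x0)V(m+1) + x0*V0 = ∑' (24 V(m+1) + x0 V m)
  have hVs : Summable (fun m => rr (m+1) * l^(2*(m+1))) := by
    exact (summable_nat_add_iff 1).mpr hV |>.congr (fun m => rfl)
  have hA : Summable (fun m => (24:ℝ) * (rr (m+1) * l^(2*(m+1)))) := hVs.mul_left _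
  have hB : Summable (fun m => x0 * (rr m * l^(2*m))) := hV.mul_left _
  have hBs : Summable (fun m => x0 * (rr (m+1) * l^(2*(m+1)))) := hVs.mul_left _
  have hgroup : ∑' m, (24 + x0) * (rr (m+1) * l^(2*(m+1)))
      = ∑' m, (24 * (rr (m+1) * l^(2*(m+1))) + x0 * (rr (m+1) * l^(2*(m+1)))) := by
    apply tsum_congr; intro m; ring
  have hsplit : ∑' m, (24 * (rr (m+1) * l^(2*(m+1))) + x0 * (rr (m+1) * l^(2*(m+1))))
      = (∑' m, 24 * (rr (m+1) * l^(2*(m+1)))) + ∑' m, x0 * (rr (m+1) * l^(2*(m+1))) :=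
    Summable.tsum_add hA hBs
  -- B-side: ∑' x0 V m = x0*V0 + ∑' x0 V(m+1)
  have hBsplit : ∑' m, x0 * (rr m * l^(2*m))
      = x0 * (rr 0 * l^(2*0)) + ∑' m, x0 * (rr (m+1) * l^(2*(m+1))) :=
    Summable.tsum_eq_zero_add hB
  -- combine: LHS = (24+x0)V0 + A + (B - x0 V0) = 24*V0 + A + B
  have hcomb : (24 + x0) * (∑' m, rr m * l^(2*m))
      = 24 * (rr 0 * l^(2*0)) + ((∑' m, 24 * (rr (m+1) * l^(2*(m+1))))
        + ∑' m, x0 * (rr m * l^(2*m))) := by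
    rw [hL1, hL2, hgroup, hsplit, hBsplit]
    ring
  -- now A + B = ∑' (24 V(m+1) + x0 V m)
  have hAB : (∑' m, 24 * (rr (m+1) * l^(2*(m+1)))) + ∑' m, x0 * (rr m * l^(2*m))
      = ∑' m, (24 * (rr (m+1) * l^(2*(m+1))) + x0 * (rr m * l^(2*m))) :=
    (Summable.tsum_add hA hB).symm
  -- termwise identity with the cc-series
  have hterm : ∀ m, 24 * (rr (m+1) * l^(2*(m+1))) + x0 * (rr m * l^(2*m))
      = -3 * (cc (m+1) * x0^(m+1)) := by
    intro m
    rw [rr_succ']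
    have hx : x0^(m+1) = (3/4)^(m+1) * (l^2)^(m+1) := by
      rw [hx0, ← mul_pow]
      congr 1
      ring
    rw [hx]
    have hl2 : l^(2*(m+1)) = (l^2)^(m+1) := by rw [pow_mul]
    have hl2' : l^(2*m) = (l^2)^m := by rw [pow_mul]
    rw [hl2, hl2', hx0]
    have : (l^2)^(m+1) = (l^2)^m * l^2 := by rw [pow_succ]
    rw [this]
    ring
  -- RHS via sqrt series
  have hsqrt : Real.sqrt (1 - x0) = ∑' k, cc k * x0^k := (tsum_cc_eq_sqrt hx00 hx01).symm
  have hTsplit : ∑' k, cc k * x0^k = cc 0 * x0^0 + ∑' k, cc (k+1) * x0^(k+1) :=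
    Summable.tsum_eq_zero_add hT
  have hTs : Summable (fun k => cc (k+1) * x0^(k+1)) := by
    exact (summable_nat_add_iff 1).mpr hT |>.congr (fun m => rfl)
  have hneg : ∑' m, (-3 : ℝ) * (cc (m+1) * x0^(m+1)) = -3 * ∑' m, cc (m+1) * x0^(m+1) :=
    tsum_mul_left
  rw [hcomb, hAB, tsum_congr hterm, hneg, hsqrt, hTsplit]
  show 24 * (rr 0 * l^0) + _ = _
  rw [show rr 0 = 1/2 from rfl]
  simp only [pow_zero, cc]
  ring

include hl0 hl1 in
lemma ram_tsum :
    ∑' m, rr m * l^(2*m+2) = 3*l^2/(5 + Real.sqrt (1 - 3*l^2/4)) := by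
  set x0 := 3*l^2/4 with hx0
  obtain ⟨hx00, hx01⟩ := x0_mem hl0 hl1
  have hs0 : 0 ≤ Real.sqrt (1 - x0) := Real.sqrt_nonneg _
  have hs5 : (0:ℝ) < 5 + Real.sqrt (1 - x0) := by linarith
  have hssq : Real.sqrt (1 - x0)^2 = 1 - x0 := Real.sq_sqrt (by linarith)
  have h24 : (0:ℝ) < 24 + x0 := by linarith
  have hkey := ram_key hl0 hl1
  have hU : ∑' m, rr m * l^(2*m) = (15 - 3 * Real.sqrt (1 - x0))/(24 + x0) := by
    rw [eq_div_iff (ne_of_gt h24), mul_comm]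
    exact hkey
  have hshift : ∑' m, rr m * l^(2*m+2) = l^2 * ∑' m, rr m * l^(2*m) := by
    rw [← tsum_mul_left]
    apply tsum_congr
    intro m
    rw [pow_add]
    ring
  rw [hshift, hU, mul_div_assoc']
  rw [div_eq_div_iff (ne_of_gt h24) (ne_of_gt hs5)]
  nlinarith [hssq]

end Ram

lemma tsum_rr_ge : (6:ℝ)/11 ≤ ∑' m, rr m := by
  have hev : ∀ᶠ l in nhdsWithin (1:ℝ) (Set.Iio 1),
      3*l^2/(5 + Real.sqrt (1 - 3*l^2/4)) ≤ ∑' m, rr m := by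
    filter_upwards [Ioo_mem_nhdsLT_of_mem (show (1:ℝ) ∈ Set.Ioc (0:ℝ) 1 by norm_num)] with l hl
    rw [← ram_tsum (le_of_lt hl.1) hl.2]
    have hf : Summable (fun m => rr m * l^(2*m+2)) := by
      apply ((summable_V (le_of_lt hl.1) hl.2).mul_left (l^2)).congr
      intro m
      rw [pow_add]
      ring
    apply Summable.tsum_le_tsum _ hf summable_rr
    intro m
    calc rr m * l^(2*m+2) ≤ rr m * 1 := by
          apply mul_le_mul_of_nonneg_left _ (rr_nonneg m)
          exact pow_le_one₀ (le_of_lt hl.1) (le_of_lt hl.2)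
      _ = rr m := mul_one _
  have hc : Continuous (fun l : ℝ => 3*l^2/(5 + Real.sqrt (1 - 3*l^2/4))) := by
    apply Continuous.div (by continuity) (by continuity)
    intro x
    have : 0 ≤ Real.sqrt (1 - 3*x^2/4) := Real.sqrt_nonneg _
    intro hcon
    linarith
  have hval : 3*(1:ℝ)^2/(5 + Real.sqrt (1 - 3*(1:ℝ)^2/4)) = 6/11 := by
    rw [show (1:ℝ) - 3*(1:ℝ)^2/4 = (1/2)^2 by norm_num, Real.sqrt_sq (by norm_num)]
    norm_num
  have htend : Filter.Tendsto (fun l : ℝ => 3*l^2/(5 + Real.sqrt (1 - 3*l^2/4)))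
      (nhdsWithin (1:ℝ) (Set.Iio 1)) (nhds (6/11)) := by
    rw [← hval]
    exact (hc.tendsto 1).mono_left nhdsWithin_le_nhds
  exact le_of_tendsto htend hev

end PartF

section PartG
open Finset
section Main
variable {l : ℝ} (hl0 : 0 ≤ l) (hl1 : l < 1)

include hl0 hl1 in
lemma EP_norm : ellipsePerimeter (1+l) (1-l) = 2*π * ∑' k, cc k^2 * l^(2*k) := by
  rw [ellipsePerimeter, integral_sqrt_eq_series hl0 hl1, tsum_mul_left]
  ring

include hl0 hl1 in
lemma RP_norm : ramanujanPerimeter (1+l) (1-l) = π * (2 + ∑' m, rr m * l^(2*m+2)) := by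
  rw [ramanujanPerimeter, ram_tsum hl0 hl1]
  have h1 : (1+l) + (1-l) = 2 := by ring
  have h2 : (1+l) - (1-l) = 2*l := by ring
  have h3 : (1+l)^2 + 14*(1+l)*(1-l) + (1-l)^2 = 16*(1 - 3*l^2/4) := by ring
  rw [h1, h2, h3]
  have h4 : Real.sqrt (16*(1 - 3*l^2/4)) = 4 * Real.sqrt (1 - 3*l^2/4) := by
    rw [show (16:ℝ)*(1 - 3*l^2/4) = (4:ℝ)^2 * (1-3*l^2/4) by ring,
      Real.sqrt_mul (by positivity), Real.sqrt_sq (by norm_num)]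
  rw [h4]
  have hs0 : 0 ≤ Real.sqrt (1 - 3*l^2/4) := Real.sqrt_nonneg _
  have h5 : 3*(2*l)^2/(10*2 + 4*Real.sqrt (1-3*l^2/4)) = 3*l^2/(5 + Real.sqrt (1-3*l^2/4)) := by
    rw [div_eq_div_iff (by linarith) (by linarith)]
    ring
  rw [h5]

set_option maxHeartbeats 2000000 in
include hl0 hl1 in
lemma main_norm :
    ellipsePerimeter (1+l) (1-l) - ramanujanPerimeter (1+l) (1-l)
      ≤ (8 - 28*π/11) * l^10 := by
  have hpi := Real.pi_pos
  rw [EP_norm hl0 hl1, RP_norm hl0 hl1]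
  have hA := summable_ccsq_pow hl0 hl1
  have hB : Summable (fun m => rr m * l^(2*m+2)) := by
    apply Summable.of_nonneg_of_le
      (fun m => mul_nonneg (rr_nonneg m) (by positivity)) (fun m => ?_) summable_rr
    calc rr m * l^(2*m+2) ≤ rr m * 1 := by
          apply mul_le_mul_of_nonneg_left _ (rr_nonneg m)
          exact pow_le_one₀ hl0 (le_of_lt hl1)
      _ = rr m := mul_one _
  -- split
  have hAsplit : ∑' k, cc k^2 * l^(2*k)
      = (∑ k ∈ range 5, cc k^2 * l^(2*k)) + ∑' k, cc (k+5)^2 * l^(2*(k+5)) :=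
    (Summable.sum_add_tsum_nat_add 5 hA).symm
  have hBsplit : ∑' m, rr m * l^(2*m+2)
      = (∑ m ∈ range 4, rr m * l^(2*m+2)) + ∑' m, rr (m+4) * l^(2*(m+4)+2) :=
    (Summable.sum_add_tsum_nat_add 4 hB).symm
  -- head cancellation
  have hhead : 2*π * (∑ k ∈ range 5, cc k^2 * l^(2*k))
      - π * (2 + ∑ m ∈ range 4, rr m * l^(2*m+2)) = 0 := by
    rw [Finset.sum_range_succ, Finset.sum_range_succ, Finset.sum_range_succ,
      Finset.sum_range_succ, Finset.sum_range_succ, Finset.sum_range_zero]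
    rw [Finset.sum_range_succ, Finset.sum_range_succ, Finset.sum_range_succ,
      Finset.sum_range_succ, Finset.sum_range_zero]
    rw [show cc 0 = 1 from rfl, cc_one, cc_two, cc_three, cc_four,
      rr_zero, rr_one, rr_two, rr_three]
    ring
  -- tails
  have hAs : Summable (fun k => cc (k+5)^2 * l^(2*(k+5))) := (summable_nat_add_iff 5).mpr hA
  have hBs : Summable (fun m => rr (m+4) * l^(2*(m+4)+2)) := (summable_nat_add_iff 4).mpr hB
  have hccs : Summable (fun k => cc (k+5)^2) := (summable_nat_add_iff 5).mpr summable_ccsq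
  have hrrs : Summable (fun m => rr (m+4)) := (summable_nat_add_iff 4).mpr summable_rr
  have hcoef : Summable (fun n => (2*cc (n+5)^2 - rr (n+4)) * l^10) :=
    ((hccs.mul_left 2).sub hrrs).mul_right _
  -- termwise tail bound
  have htail : 2 * (∑' k, cc (k+5)^2 * l^(2*(k+5))) - ∑' m, rr (m+4) * l^(2*(m+4)+2)
      ≤ (∑' n, (2*cc (n+5)^2 - rr (n+4))) * l^10 := by
    have hterm : ∀ n : ℕ, 2 * (cc (n+5)^2 * l^(2*(n+5))) - rr (n+4) * l^(2*(n+4)+2)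
        ≤ (2*cc (n+5)^2 - rr (n+4)) * l^10 := by
      intro n
      have hexp : 2*(n+5) = 2*n + 10 := by ring
      have hexp2 : 2*(n+4)+2 = 2*n + 10 := by ring
      rw [hexp, hexp2]
      have hfac : l^(2*n+10) = l^(2*n) * l^10 := by rw [pow_add]
      rw [hfac]
      have hC : 0 ≤ 2*cc (n+5)^2 - rr (n+4) := by
        have := rr_le_2ccsq (n+4) (by omega)
        rw [show n+4+1 = n+5 by ring] at this
        linarith
      have hl2n : l^(2*n) ≤ 1 := pow_le_one₀ hl0 (le_of_lt hl1)
      have h10 : (0:ℝ) ≤ l^10 := by positivity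
      calc 2 * (cc (n+5)^2 * (l^(2*n)*l^10)) - rr (n+4) * (l^(2*n)*l^10)
          = (2*cc (n+5)^2 - rr (n+4)) * l^(2*n) * l^10 := by ring
        _ ≤ (2*cc (n+5)^2 - rr (n+4)) * 1 * l^10 := by
            apply mul_le_mul_of_nonneg_right _ h10
            exact mul_le_mul_of_nonneg_left hl2n hC
        _ = (2*cc (n+5)^2 - rr (n+4)) * l^10 := by ring
    have hLs : Summable (fun n => 2*(cc (n+5)^2 * l^(2*(n+5))) - rr (n+4) * l^(2*(n+4)+2)) :=
      (hAs.mul_left 2).sub hBs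
    have h1 : ∑' n, (2*(cc (n+5)^2 * l^(2*(n+5))) - rr (n+4) * l^(2*(n+4)+2))
        ≤ ∑' n, (2*cc (n+5)^2 - rr (n+4)) * l^10 := Summable.tsum_le_tsum hterm hLs hcoef
    rw [Summable.tsum_sub (hAs.mul_left 2) hBs, tsum_mul_left] at h1
    rw [tsum_mul_right] at h1
    linarith
  -- coefficient sum bound
  have hcoefsum : ∑' n, (2*cc (n+5)^2 - rr (n+4)) ≤ 8/π - 28/11 := by
    rw [Summable.tsum_sub (hccs.mul_left 2) hrrs, tsum_mul_left]
    have hc5 : ∑' k, cc (k+5)^2 = (∑' k, cc k^2) - ∑ k ∈ range 5, cc k^2 := by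
      have := Summable.sum_add_tsum_nat_add 5 summable_ccsq (f := fun k => cc k^2)
      linarith
    have hr4 : ∑' m, rr (m+4) = (∑' m, rr m) - ∑ m ∈ range 4, rr m := by
      have := Summable.sum_add_tsum_nat_add 4 summable_rr (f := fun m => rr m)
      linarith
    rw [hc5, hr4]
    have hv1 : ∑ k ∈ range 5, cc k^2 = 20825/16384 := by
      rw [Finset.sum_range_succ, Finset.sum_range_succ, Finset.sum_range_succ,
        Finset.sum_range_succ, Finset.sum_range_succ, Finset.sum_range_zero]
      rw [show cc 0 = 1 from rfl, cc_one, cc_two, cc_three, cc_four]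
      norm_num
    have hv2 : ∑ m ∈ range 4, rr m = 4441/8192 := by
      rw [Finset.sum_range_succ, Finset.sum_range_succ, Finset.sum_range_succ,
        Finset.sum_range_succ, Finset.sum_range_zero]
      rw [rr_zero, rr_one, rr_two, rr_three]
      norm_num
    rw [hv1, hv2]
    have h1 := tsum_ccsq_le
    have h2 := tsum_rr_ge
    have h1' : 2 * ∑' k, cc k^2 ≤ 8/π := by
      rw [show (8:ℝ)/π = 2*(4/π) by ring]
      linarith
    linarith
  -- assemble
  have h10 : (0:ℝ) ≤ l^10 := by positivity
  calc 2*π * (∑' k, cc k^2 * l^(2*k)) - π * (2 + ∑' m, rr m * l^(2*m+2))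
      = π * (2 * (∑' k, cc (k+5)^2 * l^(2*(k+5))) - ∑' m, rr (m+4) * l^(2*(m+4)+2))
        + (2*π * (∑ k ∈ range 5, cc k^2 * l^(2*k))
          - π * (2 + ∑ m ∈ range 4, rr m * l^(2*m+2))) := by
        rw [hAsplit, hBsplit]; ring
    _ = π * (2 * (∑' k, cc (k+5)^2 * l^(2*(k+5))) - ∑' m, rr (m+4) * l^(2*(m+4)+2)) := by
        rw [hhead]; ring
    _ ≤ π * ((∑' n, (2*cc (n+5)^2 - rr (n+4))) * l^10) := by
        apply mul_le_mul_of_nonneg_left htail (le_of_lt hpi)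
    _ ≤ π * ((8/π - 28/11) * l^10) := by
        apply mul_le_mul_of_nonneg_left _ (le_of_lt hpi)
        exact mul_le_mul_of_nonneg_right hcoefsum h10
    _ = (8 - 28*π/11) * l^10 := by
        field_simp
  done

end Main

end PartG

theorem ramanujan_error_upper_bound (a b : ℝ) (hab : a ≥ b) (hb : b > 0) :
    ellipsePerimeter a b - ramanujanPerimeter a b ≤
      (14 / 11) * (22 / 7 - Real.pi) * (a + b) * ((a - b) / (a + b)) ^ 10 := by
  have hab0 : 0 < a + b := by linarith
  set t : ℝ := (a+b)/2 with htdef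
  set l : ℝ := (a-b)/(a+b) with hldef
  have ht : 0 < t := by rw [htdef]; linarith
  have hl0 : 0 ≤ l := div_nonneg (by linarith) (le_of_lt hab0)
  have hl1 : l < 1 := by
    rw [hldef, div_lt_one hab0]
    linarith
  have ha : t*(1+l) = a := by
    rw [htdef, hldef]
    field_simp
    ring
  have hb' : t*(1-l) = b := by
    rw [htdef, hldef]
    field_simp
    ring
  have hab2 : a + b = 2*t := by rw [← ha, ← hb']; ring
  have habl : a - b = 2*t*l := by rw [← ha, ← hb']; ring
  -- perimeter scaling
  have hEP : ellipsePerimeter a b = t * ellipsePerimeter (1+l) (1-l) := by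
    rw [ellipsePerimeter, ellipsePerimeter]
    have hint : ∀ φ : ℝ, Real.sqrt (a^2 * Real.sin φ^2 + b^2 * Real.cos φ^2)
        = t * Real.sqrt ((1+l)^2 * Real.sin φ^2 + (1-l)^2 * Real.cos φ^2) := by
      intro φ
      have h1 : a^2 * Real.sin φ^2 + b^2 * Real.cos φ^2
          = t^2 * ((1+l)^2 * Real.sin φ^2 + (1-l)^2 * Real.cos φ^2) := by
        rw [← ha, ← hb']; ring
      rw [h1, Real.sqrt_mul (sq_nonneg t), Real.sqrt_sq (le_of_lt ht)]
    rw [intervalIntegral.integral_congr (fun φ _ => hint φ)]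
    rw [intervalIntegral.integral_const_mul]
    ring
  -- ramanujan scaling
  have hX : a^2 + 14*a*b + b^2 = t^2 * ((1+l)^2 + 14*(1+l)*(1-l) + (1-l)^2) := by
    rw [← ha, ← hb']; ring
  have hsq : Real.sqrt (a^2 + 14*a*b + b^2)
      = t * Real.sqrt ((1+l)^2 + 14*(1+l)*(1-l) + (1-l)^2) := by
    rw [hX, Real.sqrt_mul (sq_nonneg t), Real.sqrt_sq (le_of_lt ht)]
  set s : ℝ := Real.sqrt ((1+l)^2 + 14*(1+l)*(1-l) + (1-l)^2) with hsdef
  have hs0 : 0 ≤ s := Real.sqrt_nonneg _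
  have hRP : ramanujanPerimeter a b = t * ramanujanPerimeter (1+l) (1-l) := by
    rw [ramanujanPerimeter, ramanujanPerimeter, hab2, habl, hsq]
    rw [show (1+l) + (1-l) = (2:ℝ) by ring, show (1+l) - (1-l) = 2*l by ring]
    rw [← hsdef]
    have hd1 : (0:ℝ) < 10*(2*t) + t*s := by nlinarith
    have hd2 : (0:ℝ) < 10*2 + s := by linarith
    field_simp
  have hRHS : (14 / 11) * (22 / 7 - Real.pi) * (a + b) * l ^ 10
      = t * ((8 - 28*π/11) * l^10) := by
    rw [hab2]
    ring
  rw [hEP, hRP, hRHS, ← mul_sub]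
  exact mul_le_mul_of_nonneg_left (main_norm hl0 hl1) (le_of_lt ht)
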